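/- Let H ∈ (0,1), H ≠ 1/2, m ≥ 0 an integer, K > 0 with Δt := 2^{-2m} ≤ K, L = 4K, and let k be an integer with 1 ≤ k ≤ K 2^{2m}. Then for every integer j ≥ 2: C_{m,k,j} := (Δt)^{H−1/2} Σ_{v=⌊(j−1)L 2^{2m}⌋+1}^{⌊ j L 2^{2m} ⌋} | (k+v+1)^{H−1/2} − (k+v)^{H−1/2} − (v+1)^{H−1/2} + v^{H−1/2} | ≤ a_H |H − 1/2| L^{H−1/2} j^{H−5/2}, where a_H = 5/2 if 0 < H < 1/2 and a_H = 5/3 if 1/2 < H < 1. -/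

import Mathlib

open Real Finset Set

-- MVT upper bound, abs version
private lemma mvt_abs {f f' : ℝ → ℝ} {x y C : ℝ} (hxy : x ≤ y)
    (hderiv : ∀ t ∈ Set.Icc x y, HasDerivAt f (f' t) t)
    (hbound : ∀ t ∈ Set.Icc x y, |f' t| ≤ C) :
    |f y - f x| ≤ C * (y - x) := by
  have := Convex.norm_image_sub_le_of_norm_hasDerivWithin_le
    (f := f) (f' := f') (s := Set.Icc x y)
    (fun t ht => (hderiv t ht).hasDerivWithinAt) hbound (convex_Icc x y)
    (Set.left_mem_Icc.2 hxy) (Set.right_mem_Icc.2 hxy)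
  simpa [Real.norm_eq_abs, abs_of_nonneg (sub_nonneg.2 hxy)] using this

private lemma base_anti {x y p : ℝ} (hx : 0 < x) (hxy : x ≤ y) (hp : p ≤ 0) :
    y ^ p ≤ x ^ p := Real.rpow_le_rpow_of_nonpos hx hxy hp

-- single difference bound : |（t+1)^β - t^β| ≤ |β| t^(β-1) for β ≤ 1, t > 0
private lemma single_diff {β t : ℝ} (hβ : β ≤ 1) (ht : 0 < t) :
    |(t+1) ^ β - t ^ β| ≤ |β| * t ^ (β - 1) := by
  have h := mvt_abs (f := fun s : ℝ => s ^ β) (f' := fun s : ℝ => β * s ^ (β - 1))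
    (x := t) (y := t + 1) (by linarith)
    (fun s hs => Real.hasDerivAt_rpow_const (Or.inl (lt_of_lt_of_le ht hs.1).ne'))
    (fun s hs => by
      rcases hs with ⟨h1, h2⟩
      have hs0 : 0 < s := lt_of_lt_of_le ht h1
      rw [abs_mul, abs_of_nonneg (Real.rpow_nonneg hs0.le _)]
      exact mul_le_mul_of_nonneg_left (base_anti ht h1 (by linarith)) (abs_nonneg β))
  simpa using h

-- second difference bound
private lemma second_diff {α x δ : ℝ} (hα : α < 1) (hx : 0 < x) (hδ : 0 ≤ δ) :
    |(x + δ + 1) ^ α - (x + δ) ^ α - (x + 1) ^ α + x ^ α|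
      ≤ |α| * (1 - α) * δ * x ^ (α - 2) := by
  have key : ∀ t ∈ Set.Icc x (x + δ),
      HasDerivAt (fun s : ℝ => (s+1) ^ α - s ^ α)
        (α * (t+1) ^ (α - 1) - α * t ^ (α - 1)) t := by
    intro t ht
    have ht0 : 0 < t := lt_of_lt_of_le hx ht.1
    have h1 : HasDerivAt (fun s : ℝ => (s+1) ^ α) (α * (t+1) ^ (α - 1)) t := by
      have := (Real.hasDerivAt_rpow_const (x := t+1) (p := α)
        (Or.inl (by positivity))).comp t ((hasDerivAt_id t).add_const 1)
      simpa [Function.comp_def] using this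
    exact h1.sub (Real.hasDerivAt_rpow_const (Or.inl ht0.ne'))
  have hb : ∀ t ∈ Set.Icc x (x + δ),
      |α * (t+1) ^ (α - 1) - α * t ^ (α - 1)| ≤ |α| * (1 - α) * x ^ (α - 2) := by
    intro t ht
    have ht0 : 0 < t := lt_of_lt_of_le hx ht.1
    have h2 : |(t+1) ^ (α-1) - t ^ (α-1)| ≤ (1 - α) * t ^ (α - 2) := by
      have := single_diff (β := α - 1) (by linarith) ht0
      have habs : |α - 1| = 1 - α := by rw [abs_of_nonpos (by linarith : α - 1 ≤ 0)]; ring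
      calc |(t+1) ^ (α-1) - t ^ (α-1)| ≤ |α-1| * t ^ (α - 1 - 1) := this
        _ = (1 - α) * t ^ (α - 2) := by rw [habs, show α - 1 - 1 = α - 2 by ring]
    calc |α * (t+1) ^ (α - 1) - α * t ^ (α - 1)|
        = |α| * |(t+1) ^ (α-1) - t ^ (α-1)| := by rw [← abs_mul]; ring_nf
      _ ≤ |α| * ((1 - α) * t ^ (α - 2)) :=
          mul_le_mul_of_nonneg_left h2 (abs_nonneg α)
      _ ≤ |α| * ((1 - α) * x ^ (α - 2)) :=
          mul_le_mul_of_nonneg_left (mul_le_mul_of_nonneg_left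
            (base_anti hx ht.1 (by linarith)) (by linarith)) (abs_nonneg α)
      _ = |α| * (1 - α) * x ^ (α - 2) := by ring
  have h := mvt_abs (x := x) (y := x + δ) (by linarith) key hb
  calc |(x + δ + 1) ^ α - (x + δ) ^ α - (x + 1) ^ α + x ^ α|
      = |((x+δ)+1) ^ α - (x+δ) ^ α - ((x+1) ^ α - x ^ α)| := by ring_nf
    _ ≤ |α| * (1 - α) * x ^ (α - 2) * (x + δ - x) := h
    _ = |α| * (1 - α) * δ * x ^ (α - 2) := by ring

-- telescoping lower bound : (1-α) v^(α-2) ≤ (v-1)^(α-1) - v^(α-1), via MVT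
private lemma tele_step {α y : ℝ} (hα : α < 1) (hy : 2 ≤ y) :
    (1 - α) * y ^ (α - 2) ≤ (y - 1) ^ (α - 1) - y ^ (α - 1) := by
  have h1 : y - 1 < y := by linarith
  have hy1 : (1:ℝ) ≤ y - 1 := by linarith
  obtain ⟨c, hc, hc'⟩ := exists_hasDerivAt_eq_slope (fun s : ℝ => s ^ (α - 1))
    (fun s : ℝ => (α - 1) * s ^ (α - 1 - 1)) h1
    (fun s hs => by
      have : (0:ℝ) < s := by rcases hs with ⟨h2, _⟩; linarith
      exact ((Real.hasDerivAt_rpow_const (Or.inl this.ne')).continuousAt).continuousWithinAt)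
    (fun s hs => Real.hasDerivAt_rpow_const (Or.inl (by rcases hs with ⟨h2, _⟩; nlinarith : s ≠ 0)))
  have hc0 : 0 < c := by rcases hc with ⟨h2, _⟩; linarith
  rw [show y - (y-1) = 1 by ring, div_one, show α - 1 - 1 = α - 2 by ring] at hc'
  have heq : (y-1) ^ (α - 1) - y ^ (α-1) = (1 - α) * c ^ (α - 2) := by
    linear_combination hc'
  rw [heq]
  exact mul_le_mul_of_nonneg_left (base_anti hc0 hc.2.le (by linarith)) (by linarith)
  
private lemma sum_tele (f : ℕ → ℝ) (a b : ℕ) (hab : a ≤ b) :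
    ∑ v ∈ Finset.Ioc a b, (f (v-1) - f v) = f a - f b := by
  induction b, hab using Nat.le_induction with
  | base => simp
  | succ n hn ih =>
      rw [Finset.sum_Ioc_succ_top (by omega), ih]
      simp

private lemma num1 : (4/3:ℝ) ^ ((3:ℝ)/2) ≤ 8/5 := by
  have h0 : (0:ℝ) ≤ (4/3:ℝ) ^ ((3:ℝ)/2) := Real.rpow_nonneg (by norm_num) _
  refine le_of_pow_le_pow_left₀ two_ne_zero (by norm_num) ?_
  have : ((4/3:ℝ) ^ ((3:ℝ)/2)) ^ (2:ℕ) = (4/3:ℝ) ^ (3:ℝ) := by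
    rw [← Real.rpow_natCast ((4/3:ℝ) ^ ((3:ℝ)/2)) 2, ← Real.rpow_mul (by norm_num)]
    norm_num
  rw [this, show (3:ℝ) = ((3:ℕ):ℝ) by norm_num, Real.rpow_natCast]
  norm_num

private lemma num2 : (1/6:ℝ) ≤ (2:ℝ) ^ (-(5:ℝ)/2) := by
  have h1 : (2:ℝ) ^ ((5:ℝ)/2) ≤ 6 := by
    have h0 : (0:ℝ) ≤ (2:ℝ) ^ ((5:ℝ)/2) := Real.rpow_nonneg (by norm_num) _
    refine le_of_pow_le_pow_left₀ two_ne_zero (by norm_num) ?_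
    have : ((2:ℝ) ^ ((5:ℝ)/2)) ^ (2:ℕ) = (2:ℝ) ^ (5:ℝ) := by
      rw [← Real.rpow_natCast ((2:ℝ) ^ ((5:ℝ)/2)) 2, ← Real.rpow_mul (by norm_num)]
      norm_num
    rw [this, show (5:ℝ) = ((5:ℕ):ℝ) by norm_num, Real.rpow_natCast]
    norm_num
  have h2 : (0:ℝ) < (2:ℝ) ^ ((5:ℝ)/2) := Real.rpow_pos_of_pos (by norm_num) _
  rw [show -(5:ℝ)/2 = -((5:ℝ)/2) by ring, Real.rpow_neg (by norm_num)]
  rw [show (1/6:ℝ) = 6⁻¹ by norm_num]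
  exact inv_anti₀ h2 h1

set_option maxHeartbeats 1000000 in
theorem statement16 (H : ℝ) (hH0 : 0 < H) (hH1 : H < 1) (hHhalf : H ≠ 1/2)
    (m : ℕ) (K : ℝ) (hK : 0 < K) (hΔK : (2:ℝ)^(-(2*(m:ℤ))) ≤ K)
    (L : ℝ) (hL : L = 4*K)
    (k : ℕ) (hk1 : 1 ≤ k) (hkK : (k : ℝ) ≤ K * 2^(2*m))
    (j : ℕ) (hj : 2 ≤ j) :
    ((2:ℝ)^(-(2*(m:ℤ)))) ^ (H - 1/2) *
      ∑ v ∈ Finset.Ioc ⌊((j:ℝ) - 1) * L * 2^(2*m)⌋₊ ⌊(j:ℝ) * L * 2^(2*m)⌋₊,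
        |((k : ℝ) + v + 1) ^ (H - 1/2) - ((k : ℝ) + v) ^ (H - 1/2)
          - ((v : ℝ) + 1) ^ (H - 1/2) + (v : ℝ) ^ (H - 1/2)|
      ≤ (if H < 1/2 then (5:ℝ)/2 else 5/3) * |H - 1/2| * L ^ (H - 1/2) * (j : ℝ) ^ (H - 5/2) := by
  have e52 : H - 5/2 = (H - 1/2) - 2 := by ring
  rw [e52]
  set α := H - 1/2 with hαdef
  set aH : ℝ := if H < 1/2 then (5:ℝ)/2 else 5/3 with haHdef
  have haH : 5/3 ≤ aH := by rw [haHdef]; split <;> norm_num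
  have hα1 : α < 1/2 := by rw [hαdef]; linarith only [hH1]
  have hα1' : α < 1 := lt_trans hα1 (by norm_num)
  have hα2 : -(1/2:ℝ) < α := by rw [hαdef]; linarith only [hH0]
  have h1α : (0:ℝ) ≤ 1 - α := by linarith only [hα1']
  set P : ℝ := 2 ^ (2*m) with hPdef
  have hP1 : (1:ℝ) ≤ P := one_le_pow₀ one_le_two
  have hP0 : (0:ℝ) < P := by linarith only [hP1]
  have hΔ : (2:ℝ)^(-(2*(m:ℤ))) = P⁻¹ := by
    rw [hPdef, zpow_neg, ← zpow_natCast (2:ℝ) (2*m)]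
    norm_num
  rw [hΔ]
  have hΔ0 : (0:ℝ) ≤ P⁻¹ := by positivity
  have hΔα0 : (0:ℝ) ≤ P⁻¹ ^ α := Real.rpow_nonneg hΔ0 _
  have hKP : 1 ≤ K * P := by
    rw [hΔ] at hΔK
    have := mul_le_mul_of_nonneg_right hΔK hP0.le
    rwa [inv_mul_cancel₀ hP0.ne'] at this
  set X : ℝ := L * P with hXdef
  have hX4 : (4:ℝ) ≤ X := by
    rw [hXdef, hL]
    calc (4:ℝ) = 4 * 1 := by ring
      _ ≤ 4 * (K * P) := by linarith only [hKP]
      _ = 4 * K * P := by ring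
  have hX0 : (0:ℝ) < X := by linarith only [hX4]
  have hL0 : (0:ℝ) < L := by rw [hL]; linarith only [hK]
  have hkX : (k:ℝ) ≤ X / 4 := by rw [hXdef, hL]; linarith only [hkK]
  have hk0 : (0:ℝ) ≤ (k:ℝ) := Nat.cast_nonneg k
  have hΔX : P⁻¹ * X = L := by rw [hXdef]; field_simp
  have hΔXα : P⁻¹ ^ α * X ^ α = L ^ α := by
    rw [← Real.mul_rpow hΔ0 hX0.le, hΔX]
  have hj2 : (2:ℝ) ≤ (j:ℝ) := by exact_mod_cast hj
  set A : ℝ := ((j:ℝ) - 1) * L * P with hAdef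
  set B : ℝ := (j:ℝ) * L * P with hBdef
  have hArw : A = ((j:ℝ) - 1) * X := by rw [hAdef, hXdef]; ring
  have hBrw : B = (j:ℝ) * X := by rw [hBdef, hXdef]; ring
  have hA4 : (4:ℝ) ≤ A := by
    rw [hArw]
    have h1 : (1:ℝ) * X ≤ ((j:ℝ) - 1) * X :=
      mul_le_mul_of_nonneg_right (by linarith only [hj2]) hX0.le
    linarith only [h1, hX4]
  have hA0 : (0:ℝ) < A := by linarith only [hA4]
  have hAB : B - A = X := by rw [hArw, hBrw]; ring
  set a : ℕ := ⌊A⌋₊ with hadef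
  set b : ℕ := ⌊B⌋₊ with hbdef
  have hab : a ≤ b := Nat.floor_mono (by linarith only [hAB, hX0])
  have ha4 : 4 ≤ a := Nat.le_floor (by exact_mod_cast hA4)
  have hbB : (b:ℝ) ≤ B := Nat.floor_le (by linarith)
  have haA : A - 1 < (a:ℝ) := Nat.sub_one_lt_floor A
  clear_value α aH P X A B a b
  -- pointwise bound on summands
  have hterm : ∀ v ∈ Finset.Ioc a b,
      |((k : ℝ) + v + 1) ^ α - ((k : ℝ) + v) ^ α - ((v : ℝ) + 1) ^ α + (v : ℝ) ^ α|
        ≤ |α| * (1 - α) * (k:ℝ) * (v:ℝ) ^ (α - 2) := by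
    intro v hv
    have hav : a < v := (Finset.mem_Ioc.1 hv).1
    have hv5 : 5 ≤ v := by omega
    have hv0 : (0:ℝ) < (v:ℝ) := by
      have h5 : (5:ℝ) ≤ (v:ℝ) := by exact_mod_cast hv5
      linarith only [h5]
    have h := second_diff (α := α) (x := (v:ℝ)) (δ := (k:ℝ)) hα1' hv0 hk0
    rw [show (v:ℝ) + (k:ℝ) + 1 = (k:ℝ) + (v:ℝ) + 1 by ring,
        show (v:ℝ) + (k:ℝ) = (k:ℝ) + (v:ℝ) by ring] at h
    exact h
  have hsum1 : ∑ v ∈ Finset.Ioc a b,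
        |((k : ℝ) + v + 1) ^ α - ((k : ℝ) + v) ^ α - ((v : ℝ) + 1) ^ α + (v : ℝ) ^ α|
      ≤ |α| * (1 - α) * (k:ℝ) * ∑ v ∈ Finset.Ioc a b, (v:ℝ) ^ (α - 2) := by
    rw [Finset.mul_sum]
    exact Finset.sum_le_sum hterm
  set Sv : ℝ := ∑ v ∈ Finset.Ioc a b, (v:ℝ) ^ (α - 2) with hSvdef
  have hSv0 : 0 ≤ Sv := Finset.sum_nonneg fun v _ => Real.rpow_nonneg (Nat.cast_nonneg v) _
  clear_value Sv
  have main : P⁻¹ ^ α * (|α| * (1 - α) * (k:ℝ) * Sv) ≤ aH * |α| * L ^ α * (j:ℝ) ^ (α - 2) := by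
    rcases eq_or_lt_of_le hj with hj2' | hj3
    · -- case j = 2 : telescoping bound
      have hjr : (j:ℝ) = 2 := by exact_mod_cast hj2'.symm
      have htele : (1 - α) * Sv ≤ (a:ℝ) ^ (α - 1) := by
        have h1 : ∀ v ∈ Finset.Ioc a b,
            (1 - α) * (v:ℝ) ^ (α - 2) ≤ ((v-1:ℕ):ℝ) ^ (α - 1) - ((v:ℕ):ℝ) ^ (α - 1) := by
          intro v hv
          have hav : a < v := (Finset.mem_Ioc.1 hv).1
          have hv5 : 5 ≤ v := by omega
          have hv2 : (2:ℝ) ≤ (v:ℝ) := by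
            have h5 : (5:ℝ) ≤ (v:ℝ) := by exact_mod_cast hv5
            linarith only [h5]
          have hcast : ((v-1:ℕ):ℝ) = (v:ℝ) - 1 := by
            rw [Nat.cast_sub (by omega)]; norm_num
          rw [hcast]
          exact tele_step hα1' hv2
        calc (1 - α) * Sv = ∑ v ∈ Finset.Ioc a b, ((1 - α) * (v:ℝ) ^ (α - 2)) := by
              rw [hSvdef, Finset.mul_sum]
          _ ≤ ∑ v ∈ Finset.Ioc a b, (((v-1:ℕ):ℝ) ^ (α - 1) - ((v:ℕ):ℝ) ^ (α - 1)) :=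
              Finset.sum_le_sum h1
          _ = (a:ℝ) ^ (α - 1) - (b:ℝ) ^ (α - 1) :=
              sum_tele (fun n : ℕ => ((n:ℕ):ℝ) ^ (α - 1)) a b hab
          _ ≤ (a:ℝ) ^ (α - 1) := by
              have hb1 : (0:ℝ) ≤ (b:ℝ) ^ (α - 1) := Real.rpow_nonneg (Nat.cast_nonneg b) _
              linarith only [hb1]
      have hAX : A = X := by rw [hArw, hjr]; ring
      have haX : (3/4) * X ≤ (a:ℝ) := by rw [hAX] at haA; linarith only [haA, hX4]
      have ha1 : (a:ℝ) ^ (α - 1) ≤ ((3/4) * X) ^ (α - 1) :=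
        base_anti (by linarith only [hX0]) haX (by linarith only [hα1'])
      have hsplit : ((3/4) * X) ^ (α - 1) = (3/4:ℝ) ^ (α - 1) * X ^ (α - 1) :=
        Real.mul_rpow (by norm_num) hX0.le
      have h34 : (3/4:ℝ) ^ (α - 1) ≤ 8/5 := by
        have e1 : (3/4:ℝ) ^ (α - 1) = (4/3:ℝ) ^ (1 - α) := by
          rw [show (3/4:ℝ) = (4/3:ℝ)⁻¹ by norm_num, Real.inv_rpow (by norm_num),
              ← Real.rpow_neg (by norm_num)]
          norm_num
        rw [e1]
        calc (4/3:ℝ) ^ (1 - α) ≤ (4/3:ℝ) ^ ((3:ℝ)/2) :=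
              Real.rpow_le_rpow_of_exponent_le (by norm_num) (by linarith only [hα2])
          _ ≤ 8/5 := num1
      have hXα : X * X ^ (α - 1) = X ^ α := by
        nth_rewrite 1 [← Real.rpow_one X]
        rw [← Real.rpow_add hX0]; norm_num
      -- combine
      have step1 : (1 - α) * Sv ≤ (8/5) * X ^ (α - 1) := by
        have hXα1 : (0:ℝ) ≤ X ^ (α - 1) := Real.rpow_nonneg hX0.le _
        calc (1 - α) * Sv ≤ (a:ℝ) ^ (α - 1) := htele
          _ ≤ (3/4:ℝ) ^ (α - 1) * X ^ (α - 1) := by rw [← hsplit]; exact ha1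
          _ ≤ (8/5) * X ^ (α - 1) := mul_le_mul_of_nonneg_right h34 hXα1
      have step2 : |α| * (1 - α) * (k:ℝ) * Sv ≤ |α| * ((X/4) * ((8/5) * X ^ (α - 1))) := by
        have hSk : (1 - α) * ((k:ℝ) * Sv) ≤ (X/4) * ((8/5) * X ^ (α-1)) := by
          have h38 : (0:ℝ) ≤ (8/5) * X ^ (α - 1) :=
            mul_nonneg (by norm_num) (Real.rpow_nonneg hX0.le _)
          calc (1 - α) * ((k:ℝ) * Sv) = (k:ℝ) * ((1 - α) * Sv) := by ring
            _ ≤ (X/4) * ((8/5) * X ^ (α - 1)) := by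
                apply mul_le_mul hkX step1 (mul_nonneg h1α hSv0) (by linarith only [hX0])
        calc |α| * (1 - α) * (k:ℝ) * Sv = |α| * ((1 - α) * ((k:ℝ) * Sv)) := by ring
          _ ≤ |α| * ((X/4) * ((8/5) * X ^ (α - 1))) :=
              mul_le_mul_of_nonneg_left hSk (abs_nonneg α)
      calc P⁻¹ ^ α * (|α| * (1 - α) * (k:ℝ) * Sv)
          ≤ P⁻¹ ^ α * (|α| * ((X/4) * ((8/5) * X ^ (α - 1)))) :=
            mul_le_mul_of_nonneg_left step2 hΔα0
        _ = (2/5) * |α| * (P⁻¹ ^ α * (X * X ^ (α - 1))) := by ring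
        _ = (2/5) * |α| * L ^ α := by rw [hXα, hΔXα]
        _ ≤ aH * |α| * L ^ α * (j:ℝ) ^ (α - 2) := by
            rw [hjr]
            have h512 : (2/5:ℝ) ≤ aH * (2:ℝ) ^ (α - 2) := by
              rw [haHdef]
              by_cases hc : H < 1/2
              · rw [if_pos hc]
                have hm : (2:ℝ) ^ (-(5:ℝ)/2) ≤ (2:ℝ) ^ (α - 2) :=
                  Real.rpow_le_rpow_of_exponent_le one_le_two (by linarith only [hα2])
                linarith only [num2, hm]
              · rw [if_neg hc]
                have hα0' : (0:ℝ) ≤ α := by rw [hαdef]; push_neg at hc; linarith only [hc]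
                have hm : (2:ℝ) ^ (-(2:ℝ)) ≤ (2:ℝ) ^ (α - 2) :=
                  Real.rpow_le_rpow_of_exponent_le one_le_two (by linarith only [hα0'])
                have e2 : (2:ℝ) ^ (-(2:ℝ)) = 1/4 := by
                  rw [Real.rpow_neg (by norm_num), show (2:ℝ) = ((2:ℕ):ℝ) by norm_num,
                      Real.rpow_natCast]
                  norm_num
                rw [e2] at hm
                linarith only [hm]
            have hLα : (0:ℝ) ≤ L ^ α := Real.rpow_nonneg hL0.le _
            have hmm := mul_le_mul_of_nonneg_right h512
              (mul_nonneg (abs_nonneg α) hLα)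
            calc (2/5) * |α| * L ^ α = (2/5) * (|α| * L ^ α) := by ring
              _ ≤ (aH * (2:ℝ) ^ (α - 2)) * (|α| * L ^ α) := hmm
              _ = aH * |α| * L ^ α * (2:ℝ) ^ (α - 2) := by ring
    · -- case j ≥ 3 : crude bound
      have hj3' : 3 ≤ j := hj3
      have hjr3 : (3:ℝ) ≤ (j:ℝ) := by exact_mod_cast hj3'
      have hj0 : (0:ℝ) < (j:ℝ) := by linarith only [hjr3]
      -- each v ≥ A
      have hSv1 : Sv ≤ ((b - a : ℕ):ℝ) * A ^ (α - 2) := by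
        rw [hSvdef]
        have := Finset.sum_le_card_nsmul (Finset.Ioc a b)
          (fun v => (v:ℝ) ^ (α - 2)) (A ^ (α - 2)) ?_
        · simpa [Nat.card_Ioc, nsmul_eq_mul] using this
        · intro v hv
          have hav : a < v := (Finset.mem_Ioc.1 hv).1
          have hAv : A ≤ (v:ℝ) := by
            have h1 : A < (a:ℝ) + 1 := by rw [hadef]; exact Nat.lt_floor_add_one A
            have h2 : (a:ℝ) + 1 ≤ (v:ℝ) := by exact_mod_cast hav
            linarith only [h1, h2]
          exact base_anti hA0 hAv (by linarith only [hα1'])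
      have hcard : ((b - a : ℕ):ℝ) ≤ (5/4) * X := by
        rw [Nat.cast_sub hab]
        have h54 : X + 1 ≤ (5/4) * X := by linarith only [hX4]
        linarith only [h54, hbB, haA, hAB]
      have hAα : A ^ (α - 2) = ((j:ℝ) - 1) ^ (α - 2) * X ^ (α - 2) := by
        rw [hArw]
        exact Real.mul_rpow (by linarith only [hjr3]) hX0.le
      have hXX : X * X * X ^ (α - 2) = X ^ α := by
        nth_rewrite 1 [← Real.rpow_one X]
        nth_rewrite 2 [← Real.rpow_one X]
        rw [← Real.rpow_add hX0, ← Real.rpow_add hX0]; norm_num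
      have hA2 : (0:ℝ) ≤ A ^ (α - 2) := Real.rpow_nonneg hA0.le _
      have hjj : ((j:ℝ) - 1) ^ (α - 2) ≤ (27/8) * (j:ℝ) ^ (α - 2) := by
        have h23 : (2/3) * (j:ℝ) ≤ (j:ℝ) - 1 := by linarith only [hjr3]
        have h1 : ((j:ℝ) - 1) ^ (α - 2) ≤ ((2/3) * (j:ℝ)) ^ (α - 2) :=
          base_anti (by linarith only [hj0]) h23 (by linarith only [hα1'])
        have h2 : ((2/3) * (j:ℝ)) ^ (α - 2) = (2/3:ℝ) ^ (α - 2) * (j:ℝ) ^ (α - 2) :=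
          Real.mul_rpow (by norm_num) hj0.le
        have h3 : (2/3:ℝ) ^ (α - 2) ≤ 27/8 := by
          have e1 : (2/3:ℝ) ^ (α - 2) = (3/2:ℝ) ^ (2 - α) := by
            rw [show (2/3:ℝ) = (3/2:ℝ)⁻¹ by norm_num, Real.inv_rpow (by norm_num),
                ← Real.rpow_neg (by norm_num)]
            norm_num
          rw [e1]
          calc (3/2:ℝ) ^ (2 - α) ≤ (3/2:ℝ) ^ (3:ℝ) :=
                Real.rpow_le_rpow_of_exponent_le (by norm_num) (by linarith only [hα2])
            _ = 27/8 := by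
                rw [show (3:ℝ) = ((3:ℕ):ℝ) by norm_num, Real.rpow_natCast]
                norm_num
        have hj2' : (0:ℝ) ≤ (j:ℝ) ^ (α - 2) := Real.rpow_nonneg hj0.le _
        calc ((j:ℝ) - 1) ^ (α - 2) ≤ (2/3:ℝ) ^ (α - 2) * (j:ℝ) ^ (α - 2) := by
              rw [← h2]; exact h1
          _ ≤ (27/8) * (j:ℝ) ^ (α - 2) := mul_le_mul_of_nonneg_right h3 hj2'
      have step2 : |α| * (1 - α) * (k:ℝ) * Sv
          ≤ |α| * (1 - α) * ((X/4) * ((5/4) * X * A ^ (α - 2))) := by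
        have hq : (k:ℝ) * Sv ≤ (X/4) * ((5/4) * X * A ^ (α - 2)) := by
          calc (k:ℝ) * Sv ≤ (X/4) * (((b - a:ℕ):ℝ) * A ^ (α - 2)) :=
                mul_le_mul hkX hSv1 hSv0 (by linarith)
            _ ≤ (X/4) * ((5/4) * X * A ^ (α - 2)) := by
                apply mul_le_mul_of_nonneg_left _ (by linarith only [hX0])
                exact mul_le_mul_of_nonneg_right hcard hA2
        calc |α| * (1 - α) * (k:ℝ) * Sv = (|α| * (1 - α)) * ((k:ℝ) * Sv) := by ring
          _ ≤ (|α| * (1 - α)) * ((X/4) * ((5/4) * X * A ^ (α - 2))) :=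
              mul_le_mul_of_nonneg_left hq (mul_nonneg (abs_nonneg α) h1α)
          _ = |α| * (1 - α) * ((X/4) * ((5/4) * X * A ^ (α - 2))) := by ring
      calc P⁻¹ ^ α * (|α| * (1 - α) * (k:ℝ) * Sv)
          ≤ P⁻¹ ^ α * (|α| * (1 - α) * ((X/4) * ((5/4) * X * A ^ (α - 2)))) :=
            mul_le_mul_of_nonneg_left step2 hΔα0
        _ = (5/16) * (1 - α) * |α| * (P⁻¹ ^ α * (X * X * A ^ (α - 2))) := by ring
        _ = (5/16) * (1 - α) * |α| * (L ^ α * ((j:ℝ) - 1) ^ (α - 2)) := by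
            rw [hAα, show X * X * (((j:ℝ) - 1) ^ (α - 2) * X ^ (α - 2))
                = (X * X * X ^ (α - 2)) * ((j:ℝ) - 1) ^ (α - 2) by ring, hXX,
              show P⁻¹ ^ α * (X ^ α * ((j:ℝ) - 1) ^ (α - 2))
                = (P⁻¹ ^ α * X ^ α) * ((j:ℝ) - 1) ^ (α - 2) by ring, hΔXα]
        _ ≤ (5/16) * (1 - α) * |α| * (L ^ α * ((27/8) * (j:ℝ) ^ (α - 2))) := by
            apply mul_le_mul_of_nonneg_left _
              (mul_nonneg (mul_nonneg (by norm_num) h1α) (abs_nonneg α))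
            exact mul_le_mul_of_nonneg_left hjj (Real.rpow_nonneg hL0.le _)
        _ = ((5/16) * (1 - α) * (27/8)) * (|α| * (L ^ α * (j:ℝ) ^ (α - 2))) := by ring
        _ ≤ aH * |α| * L ^ α * (j:ℝ) ^ (α - 2) := by
            have hco : (5/16) * (1 - α) * (27/8) ≤ aH := by
              have h32 : (5/16:ℝ) * (1 - α) * (27/8) ≤ (5/16) * (3/2) * (27/8) := by
                linarith only [hα2]
              calc (5/16:ℝ) * (1 - α) * (27/8) ≤ (5/16) * (3/2) * (27/8) := h32
                _ ≤ 5/3 := by norm_num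
                _ ≤ aH := haH
            have hrest : (0:ℝ) ≤ |α| * (L ^ α * (j:ℝ) ^ (α - 2)) :=
              mul_nonneg (abs_nonneg α)
                (mul_nonneg (Real.rpow_nonneg hL0.le _) (Real.rpow_nonneg hj0.le _))
            calc ((5/16) * (1 - α) * (27/8)) * (|α| * (L ^ α * (j:ℝ) ^ (α - 2)))
                ≤ aH * (|α| * (L ^ α * (j:ℝ) ^ (α - 2))) :=
                  mul_le_mul_of_nonneg_right hco hrest
              _ = aH * |α| * L ^ α * (j:ℝ) ^ (α - 2) := by ring
  calc P⁻¹ ^ α * ∑ v ∈ Finset.Ioc a b,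
        |((k : ℝ) + v + 1) ^ α - ((k : ℝ) + v) ^ α - ((v : ℝ) + 1) ^ α + (v : ℝ) ^ α|
      ≤ P⁻¹ ^ α * (|α| * (1 - α) * (k:ℝ) * Sv) := mul_le_mul_of_nonneg_left hsum1 hΔα0
    _ ≤ aH * |α| * L ^ α * (j:ℝ) ^ (α - 2) := main
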